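/- arXiv:2511.11363 — 3 statements merged into one kernel-verified Lean document; each statement's English description precedes it below -/
import Mathlib

section
/- Pointwise logistic–entropy lower bound: Let 0 < h̲ ≤ h̄, 0 < k̲ ≤ k̄ and χ > 0 be constants. Then there exist constants κ > 0 and c ≥ 0 such that for every s > 0, every t ∈ [−1, 1], every H ∈ [h̲, h̄] and every K ∈ [k̲, k̄] one has (H s² − K s)(log s − χ t) ≥ (h̲/2) s² log(1 + s) + κ s log(1 + s) − c. -/
set_option maxHeartbeats 1000000


/-- **Pointwise logistic–entropy lower bound.** Given `0 < h̲ ≤ h̄`, `0 < k̲ ≤ k̄`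
and `χ > 0`, there are `κ > 0` and `c ≥ 0` such that for all `s > 0`, `t ∈ [-1,1]`,
`H ∈ [h̲, h̄]`, `K ∈ [k̲, k̄]`:
`(H s² − K s)(log s − χ t) ≥ (h̲/2) s² log(1+s) + κ s log(1+s) − c`. -/
theorem logistic_entropy_lower_bound
    (hlo hhi klo khi χ : ℝ)
    (h1 : 0 < hlo) (h2 : hlo ≤ hhi) (h3 : 0 < klo) (h4 : klo ≤ khi) (hχ : 0 < χ) :
    ∃ κ > (0:ℝ), ∃ c ≥ (0:ℝ),
      ∀ s > (0:ℝ), ∀ t ∈ Set.Icc (-1:ℝ) 1,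
        ∀ H ∈ Set.Icc hlo hhi, ∀ K ∈ Set.Icc klo khi,
          (H * s ^ 2 - K * s) * (Real.log s - χ * t)
            ≥ hlo / 2 * s ^ 2 * Real.log (1 + s) + κ * s * Real.log (1 + s) - c := by
  have hhi0 : 0 < hhi := lt_of_lt_of_le h1 h2
  have hkhi0 : 0 < khi := lt_of_lt_of_le h3 h4
  set A : ℝ := hlo * χ + hlo / 2 + khi + 2 with hAdef
  have hA0 : 0 < A := by positivity
  set R : ℝ := max (Real.exp (2 * A / hlo)) (2 * khi / hlo) with hRdef
  have hR1 : (1:ℝ) ≤ R :=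
    le_trans (Real.one_le_exp (by positivity)) (le_max_left _ _)
  have hR0 : (0:ℝ) < R := lt_of_lt_of_le one_pos hR1
  have hRk : 2 * khi / hlo ≤ R := le_max_right _ _
  have hlogR : 2 * A / hlo ≤ Real.log R := by
    rw [Real.le_log_iff_exp_le hR0]
    exact le_max_left _ _
  refine ⟨1, one_pos, (hhi * R + khi) * (1 + R ^ 2 + χ * R) + hlo / 2 * R ^ 3 + R ^ 2,
    by positivity, ?_⟩
  intro s hs t ht H hH K hK
  obtain ⟨ht1, ht2⟩ := ht
  obtain ⟨hH1, hH2⟩ := hH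
  obtain ⟨hK1, hK2⟩ := hK
  have hlog_le : Real.log s ≤ s := (Real.log_le_sub_one_of_pos hs).trans (by linarith)
  have hlog1s : Real.log (1 + s) ≤ s := by
    have := Real.log_le_sub_one_of_pos (show (0:ℝ) < 1 + s by linarith)
    linarith
  have hlog1s0 : 0 ≤ Real.log (1 + s) := Real.log_nonneg (by linarith)
  rcases le_total s R with hsR | hsR
  · -- small case : s ≤ R
    have habsP : |H * s ^ 2 - K * s| ≤ hhi * s ^ 2 + khi * s := by
      rw [abs_le]
      constructor <;> nlinarith [sq_nonneg s]
    have habsQ : |Real.log s - χ * t| ≤ |Real.log s| + χ := by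
      rw [abs_le]
      have h5 := le_abs_self (Real.log s)
      have h6 := neg_abs_le (Real.log s)
      constructor <;> nlinarith
    have hsl : s * |Real.log s| ≤ 1 + R ^ 2 := by
      rcases le_total s 1 with hs1 | hs1
      · have hlognp : Real.log s ≤ 0 := Real.log_nonpos (le_of_lt hs) hs1
        rw [abs_of_nonpos hlognp]
        have hinv : Real.log s⁻¹ ≤ s⁻¹ - 1 :=
          Real.log_le_sub_one_of_pos (by positivity)
        rw [Real.log_inv] at hinv
        have : s * (-Real.log s) ≤ s * (s⁻¹ - 1) :=
          mul_le_mul_of_nonneg_left hinv (le_of_lt hs)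
        have hsi : s * s⁻¹ = 1 := mul_inv_cancel₀ (ne_of_gt hs)
        nlinarith [sq_nonneg R]
      · have hlognn : 0 ≤ Real.log s := Real.log_nonneg hs1
        rw [abs_of_nonneg hlognn]
        nlinarith
    have hPQ : (H * s ^ 2 - K * s) * (Real.log s - χ * t)
        ≥ -((hhi * s ^ 2 + khi * s) * (|Real.log s| + χ)) := by
      have h7 : |(H * s ^ 2 - K * s) * (Real.log s - χ * t)|
          ≤ (hhi * s ^ 2 + khi * s) * (|Real.log s| + χ) := by
        rw [abs_mul]
        exact mul_le_mul habsP habsQ (abs_nonneg _) (by positivity)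
      have := neg_abs_le ((H * s ^ 2 - K * s) * (Real.log s - χ * t))
      linarith
    have hbound : (hhi * s ^ 2 + khi * s) * (|Real.log s| + χ)
        ≤ (hhi * R + khi) * (1 + R ^ 2 + χ * R) := by
      have habs0 : 0 ≤ |Real.log s| := abs_nonneg _
      have e1 : s * |Real.log s| + s * χ ≤ 1 + R ^ 2 + χ * R := by nlinarith
      have e2 : hhi * s + khi ≤ hhi * R + khi := by nlinarith
      have e3 : 0 ≤ s * |Real.log s| + s * χ :=
        add_nonneg (mul_nonneg hs.le habs0) (mul_nonneg hs.le hχ.le)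
      calc (hhi * s ^ 2 + khi * s) * (|Real.log s| + χ)
          = (hhi * s + khi) * (s * |Real.log s| + s * χ) := by ring
        _ ≤ (hhi * R + khi) * (1 + R ^ 2 + χ * R) :=
            mul_le_mul e2 e1 e3 (by positivity)
    have hrhs : hlo / 2 * s ^ 2 * Real.log (1 + s) + 1 * s * Real.log (1 + s)
        ≤ hlo / 2 * R ^ 3 + R ^ 2 := by
      have hsR2 : s ^ 2 ≤ R ^ 2 := by nlinarith
      have hlR : Real.log (1 + s) ≤ R := le_trans hlog1s hsR
      have e4 : s ^ 2 * Real.log (1 + s) ≤ R ^ 2 * R :=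
        mul_le_mul hsR2 hlR hlog1s0 (by positivity)
      have e5 : s * Real.log (1 + s) ≤ R * R := mul_le_mul hsR hlR hlog1s0 hR0.le
      nlinarith [e4, e5]
    linarith
  · -- large case : R ≤ s
    have hs1 : (1:ℝ) ≤ s := le_trans hR1 hsR
    have hlogs : 2 * A / hlo ≤ Real.log s :=
      le_trans hlogR (Real.log_le_log hR0 hsR)
    have hAL : 2 * A ≤ hlo * Real.log s := by
      rw [div_le_iff₀ h1] at hlogs
      linarith [hlogs]
    have hL0 : 0 ≤ Real.log s := Real.log_nonneg hs1
    have hAL2 : 2 * (hlo * χ) + hlo + 2 * khi + 4 ≤ hlo * Real.log s := by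
      have h10 := hAL; rw [hAdef] at h10; linarith
    have hχL : χ + 1 ≤ Real.log s := by
      by_contra h; push_neg at h
      nlinarith [mul_lt_mul_of_pos_left h h1]
    have hQ0 : 0 ≤ Real.log s - χ := by linarith
    have hQ : Real.log s - χ ≤ Real.log s - χ * t := by nlinarith
    have hks : 2 * khi ≤ hlo * s := by
      rw [div_le_iff₀ h1] at hRk
      nlinarith
    have hP0 : 0 ≤ hlo * s ^ 2 - khi * s := by nlinarith
    have hP : hlo * s ^ 2 - khi * s ≤ H * s ^ 2 - K * s := by nlinarith
    have key : (hlo * s ^ 2 - khi * s) * (Real.log s - χ)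
        ≤ (H * s ^ 2 - K * s) * (Real.log s - χ * t) :=
      mul_le_mul hP hQ hQ0 (le_trans hP0 hP)
    have hlog2 : Real.log (1 + s) ≤ 1 + Real.log s := by
      have h8 : Real.log (1 + s) ≤ Real.log (2 * s) :=
        Real.log_le_log (by linarith) (by linarith)
      rw [Real.log_mul two_ne_zero (ne_of_gt hs)] at h8
      have h9 : Real.log 2 ≤ 1 := by
        have := Real.log_le_sub_one_of_pos (show (0:ℝ) < 2 by norm_num)
        linarith
      linarith
    have main : hlo / 2 * s ^ 2 * Real.log (1 + s) + 1 * s * Real.log (1 + s)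
        ≤ (hlo * s ^ 2 - khi * s) * (Real.log s - χ) := by
      have hs2 : s ≤ s ^ 2 := by nlinarith
      have hLs : Real.log s ≤ s := hlog_le
      nlinarith [mul_le_mul_of_nonneg_left hlog2 (by positivity : (0:ℝ) ≤ hlo / 2 * s ^ 2 + s),
        mul_le_mul_of_nonneg_right hAL2 (sq_nonneg s),
        mul_le_mul_of_nonneg_right hLs (mul_nonneg hkhi0.le hs.le),
        mul_le_mul_of_nonneg_right hLs hs.le,
        mul_nonneg (mul_nonneg hkhi0.le hχ.le) hs.le,
        mul_le_mul_of_nonneg_left hs2 hkhi0.le,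
        mul_nonneg hL0 (sq_nonneg s)]
    have hc : (0:ℝ) ≤ (hhi * R + khi) * (1 + R ^ 2 + χ * R) + hlo / 2 * R ^ 3 + R ^ 2 := by
      positivity
    linarith
end

section
/- Coercivity of the physical energy: Let (Ω, μ) be a finite measure space, let χ > 0 and λ ≥ 0 be constants, and let β̂ : ℝ → [0, +∞] be a convex, lower semicontinuous function with β̂(0) = 0 and β̂(r) = +∞ for |r| > 1. Then there exist constants κ > 0 and c ≥ 0 such that: for every measurable φ : Ω → ℝ with |φ| ≤ 1 almost everywhere and β̂ ∘ φ integrable, every measurable σ : Ω → ℝ with σ ≥ 0 almost everywhere and σ log(1 + σ) integrable, and every real number G ≥ 0, one has (1/2) G + ∫_Ω (β̂(φ) − (λ/2) φ² + σ(log σ − 1) − χ σ φ) dμ ≥ κ (G + ∫_Ω φ² dμ + ∫_Ω σ log(1 + σ) dμ + ∫_Ω β̂(φ) dμ) − c. -/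
open MeasureTheory
open scoped ENNReal

/-- `s log s ≥ s log(1+s) − 1` for `s ≥ 0`. -/
lemma slog_lower (s : ℝ) (hs : 0 ≤ s) :
    s * Real.log (1 + s) - 1 ≤ s * Real.log s := by
  rcases eq_or_lt_of_le hs with h | h
  · simp [← h]
  · have hpos : (0:ℝ) < (1 + s) / s := by positivity
    have h1 : Real.log ((1 + s) / s) ≤ (1 + s) / s - 1 := Real.log_le_sub_one_of_pos hpos
    have h2 : (1 + s) / s - 1 = 1 / s := by field_simp; ring
    have h3 : Real.log ((1 + s) / s) = Real.log (1 + s) - Real.log s :=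
      Real.log_div (by positivity) (ne_of_gt h)
    have h4 : Real.log (1 + s) - Real.log s ≤ 1 / s := by rw [← h3]; linarith
    have h5 : s * (Real.log (1 + s) - Real.log s) ≤ s * (1 / s) :=
      mul_le_mul_of_nonneg_left h4 hs
    have h6 : s * (1 / s) = 1 := by field_simp
    nlinarith [h5]

/-- Key scalar estimate. -/
lemma key_scalar (χ s p : ℝ) (hχ : 0 < χ) (hs : 0 ≤ s) (hp : |p| ≤ 1) :
    (1/2) * (s * Real.log (1 + s)) - (1 + (1+χ) * Real.exp (2*(1+χ)))
      ≤ s * (Real.log s - 1) - χ * s * p := by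
  set K : ℝ := 1 + χ with hK
  set E : ℝ := Real.exp (2 * K) with hE
  have hKpos : 0 < K := by simp [hK]; linarith
  have hEpos : 0 < E := Real.exp_pos _
  have hL0 : 0 ≤ Real.log (1 + s) := Real.log_nonneg (by linarith)
  have h1 : χ * s * p ≤ χ * s := by
    have hp1 : p ≤ 1 := (abs_le.mp hp).2
    nlinarith [mul_nonneg hχ.le hs]
  have h2 := slog_lower s hs
  have hKE : 0 ≤ K * E := by positivity
  rcases le_total s E with hse | hse
  · have h3 : K * s ≤ K * E := mul_le_mul_of_nonneg_left hse hKpos.le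
    have h4 : 0 ≤ (1/2) * (s * Real.log (1 + s)) := by positivity
    nlinarith
  · have hElog : Real.log E = 2 * K := Real.log_exp _
    have hlog1 : Real.log E ≤ Real.log s := Real.log_le_log hEpos hse
    have hlog2 : Real.log s ≤ Real.log (1 + s) := Real.log_le_log (by linarith) (by linarith)
    have hL2 : 2 * K ≤ Real.log (1 + s) := by linarith
    have h5 : s * (2 * K) ≤ s * Real.log (1 + s) := mul_le_mul_of_nonneg_left hL2 hs
    nlinarith

/-- **Coercivity of the physical energy.** Let `(Ω, μ)` be a finite measure space,
`χ > 0`, `λ ≥ 0`, and let `B = β̂ : ℝ → [0, +∞]` be convex, lower semicontinuous,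
with `β̂ 0 = 0` and `β̂ r = +∞` for `|r| > 1`. Then there are `κ > 0` and `c ≥ 0`
such that for all measurable `φ` with `|φ| ≤ 1` a.e. and `β̂ ∘ φ` integrable, all
measurable `σ ≥ 0` a.e. with `σ log(1+σ)` integrable, and all `G ≥ 0`:
`(1/2) G + ∫ (β̂(φ) − (λ/2)φ² + σ(log σ − 1) − χ σ φ)
  ≥ κ (G + ∫ φ² + ∫ σ log(1+σ) + ∫ β̂(φ)) − c`. -/
theorem energy_coercivity
    {Ω : Type*} [MeasurableSpace Ω] (μ : Measure Ω) [IsFiniteMeasure μ]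
    (χ lam : ℝ) (hχ : 0 < χ) (hlam : 0 ≤ lam)
    (B : ℝ → ℝ≥0∞)
    (hB_conv : ∀ x y t : ℝ, 0 ≤ t → t ≤ 1 →
      B (t * x + (1 - t) * y) ≤ ENNReal.ofReal t * B x + ENNReal.ofReal (1 - t) * B y)
    (hB_lsc : LowerSemicontinuous B)
    (hB0 : B 0 = 0)
    (hB_top : ∀ r : ℝ, 1 < |r| → B r = ⊤) :
    ∃ κ > (0:ℝ), ∃ c ≥ (0:ℝ),
      ∀ (φ σ : Ω → ℝ) (G : ℝ),
        Measurable φ → (∀ᵐ x ∂μ, |φ x| ≤ 1) →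
        (∫⁻ x, B (φ x) ∂μ) ≠ ⊤ →
        Measurable σ → (∀ᵐ x ∂μ, 0 ≤ σ x) →
        Integrable (fun x => σ x * Real.log (1 + σ x)) μ →
        0 ≤ G →
        (1/2) * G
          + ∫ x, ((B (φ x)).toReal - lam / 2 * (φ x) ^ 2
              + σ x * (Real.log (σ x) - 1) - χ * σ x * φ x) ∂μ
        ≥ κ * (G + (∫ x, (φ x) ^ 2 ∂μ) + (∫ x, σ x * Real.log (1 + σ x) ∂μ)
              + (∫ x, (B (φ x)).toReal ∂μ)) - c := by
  set c₀ : ℝ := (lam + 1)/2 + 1 + (1+χ) * Real.exp (2*(1+χ)) with hc₀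
  have hc₀pos : 0 < c₀ := by
    have : 0 < (1+χ) * Real.exp (2*(1+χ)) := by positivity
    simp only [hc₀]; linarith
  refine ⟨1/2, by norm_num, c₀ * (μ Set.univ).toReal,
    mul_nonneg hc₀pos.le ENNReal.toReal_nonneg, ?_⟩
  intro φ σ G hφm hφ1 hBfin hσm hσ0 hSint hG
  -- integrability of the various pieces
  have hBφm : AEMeasurable (fun x => B (φ x)) μ := (hB_lsc.measurable.comp hφm).aemeasurable
  have hBint : Integrable (fun x => (B (φ x)).toReal) μ :=
    integrable_toReal_of_lintegral_ne_top hBφm hBfin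
  have hφ2int : Integrable (fun x => (φ x) ^ 2) μ := by
    refine (integrable_const (1:ℝ)).mono' (hφm.pow_const 2).aestronglyMeasurable ?_
    filter_upwards [hφ1] with x hx
    rw [Real.norm_eq_abs, abs_of_nonneg (sq_nonneg _)]
    nlinarith [sq_abs (φ x), abs_nonneg (φ x)]
  have hσint : Integrable σ μ := by
    refine ((hSint.const_mul ((Real.log 2)⁻¹)).add (integrable_const 1)).mono'
      hσm.aestronglyMeasurable ?_
    filter_upwards [hσ0] with x hx
    simp only [Pi.add_apply]
    rw [Real.norm_eq_abs, abs_of_nonneg hx]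
    have h2 : 0 < Real.log 2 := Real.log_pos (by norm_num)
    rcases le_total (σ x) 1 with h | h
    · have hn : 0 ≤ (Real.log 2)⁻¹ * (σ x * Real.log (1 + σ x)) := by
        have := Real.log_nonneg (show (1:ℝ) ≤ 1 + σ x by linarith)
        positivity
      linarith
    · have hl2 : Real.log 2 ≤ Real.log (1 + σ x) := Real.log_le_log (by norm_num) (by linarith)
      have h3 : σ x * Real.log 2 ≤ σ x * Real.log (1 + σ x) := mul_le_mul_of_nonneg_left hl2 hx
      have h4 : (Real.log 2)⁻¹ * (σ x * Real.log 2) ≤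
          (Real.log 2)⁻¹ * (σ x * Real.log (1 + σ x)) :=
        mul_le_mul_of_nonneg_left h3 (inv_nonneg.mpr h2.le)
      have h5 : (Real.log 2)⁻¹ * (σ x * Real.log 2) = σ x := by field_simp
      linarith
  have hσlogint : Integrable (fun x => σ x * Real.log (σ x)) μ := by
    refine (hSint.add (integrable_const 1)).mono'
      (hσm.mul (Real.measurable_log.comp hσm)).aestronglyMeasurable ?_
    filter_upwards [hσ0] with x hx
    simp only [Pi.add_apply]
    have hS0 : 0 ≤ σ x * Real.log (1 + σ x) :=
      mul_nonneg hx (Real.log_nonneg (by linarith))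
    rw [Real.norm_eq_abs]
    rcases le_total (σ x) 1 with h | h
    · have hb : |σ x * Real.log (σ x)| ≤ 1 := by
        rcases eq_or_lt_of_le hx with h0 | h0
        · simp [← h0]
        · have hlog : Real.log (σ x) ≤ 0 := Real.log_nonpos hx h
          have hnp : σ x * Real.log (σ x) ≤ 0 := mul_nonpos_of_nonneg_of_nonpos hx hlog
          rw [abs_of_nonpos hnp]
          have hi1 : Real.log (σ x)⁻¹ ≤ (σ x)⁻¹ - 1 :=
            Real.log_le_sub_one_of_pos (by positivity)
          have hi2 : Real.log (σ x)⁻¹ = - Real.log (σ x) := Real.log_inv _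
          have hi3 : σ x * (-(Real.log (σ x))) ≤ σ x * ((σ x)⁻¹ - 1) :=
            mul_le_mul_of_nonneg_left (by rw [← hi2]; exact hi1) hx
          have hi4 : σ x * (σ x)⁻¹ = 1 := mul_inv_cancel₀ h0.ne'
          nlinarith
      linarith
    · have hlog0 : 0 ≤ Real.log (σ x) := Real.log_nonneg h
      rw [abs_of_nonneg (mul_nonneg hx hlog0)]
      have hm : Real.log (σ x) ≤ Real.log (1 + σ x) := Real.log_le_log (by linarith) (by linarith)
      nlinarith [mul_le_mul_of_nonneg_left hm hx]
  have hχσφint : Integrable (fun x => χ * σ x * φ x) μ := by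
    refine (hσint.const_mul χ).mono' ((hσm.const_mul χ).mul hφm).aestronglyMeasurable ?_
    filter_upwards [hσ0, hφ1] with x hs hp
    rw [Real.norm_eq_abs, abs_mul, abs_mul, abs_of_nonneg hχ.le, abs_of_nonneg hs]
    have h1 : χ * σ x * |φ x| ≤ χ * σ x * 1 :=
      mul_le_mul_of_nonneg_left hp (by positivity)
    linarith
  have hf_int : Integrable (fun x => (B (φ x)).toReal - lam / 2 * (φ x) ^ 2
      + σ x * (Real.log (σ x) - 1) - χ * σ x * φ x) μ := by
    have h := ((hBint.sub (hφ2int.const_mul (lam/2))).add (hσlogint.sub hσint)).sub hχσφint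
    exact h.congr (ae_of_all _ fun x => by simp only [Pi.add_apply, Pi.sub_apply]; ring)
  -- the lower-bound function g
  set g : Ω → ℝ := fun x => (1/2) * (B (φ x)).toReal + (1/2) * (φ x) ^ 2
      + (1/2) * (σ x * Real.log (1 + σ x)) - c₀ with hg
  have iB : Integrable (fun x => (1/2 : ℝ) * (B (φ x)).toReal) μ := hBint.const_mul _
  have iP : Integrable (fun x => (1/2 : ℝ) * (φ x) ^ 2) μ := hφ2int.const_mul _
  have iS : Integrable (fun x => (1/2 : ℝ) * (σ x * Real.log (1 + σ x))) μ := hSint.const_mul _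
  have i1 : Integrable (fun x => (1/2 : ℝ) * (B (φ x)).toReal + (1/2) * (φ x) ^ 2) μ := iB.add iP
  have i2 : Integrable (fun x => (1/2 : ℝ) * (B (φ x)).toReal + (1/2) * (φ x) ^ 2
      + (1/2) * (σ x * Real.log (1 + σ x))) μ := i1.add iS
  have hg_int : Integrable g μ := i2.sub (integrable_const c₀)
  have hmono : ∫ x, g x ∂μ ≤ ∫ x, ((B (φ x)).toReal - lam / 2 * (φ x) ^ 2
      + σ x * (Real.log (σ x) - 1) - χ * σ x * φ x) ∂μ := by
    refine integral_mono_ae hg_int hf_int ?_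
    filter_upwards [hφ1, hσ0] with x hp hs
    have hkey := key_scalar χ (σ x) (φ x) hχ hs hp
    have hB0' : 0 ≤ (B (φ x)).toReal := ENNReal.toReal_nonneg
    have hp2 : (φ x) ^ 2 ≤ 1 := by nlinarith [sq_abs (φ x), abs_nonneg (φ x)]
    have hmul : ((1 + lam)/2) * (φ x) ^ 2 ≤ (1 + lam)/2 :=
      mul_le_of_le_one_right (by linarith) hp2
    simp only [hg, hc₀]
    nlinarith
  have hsplit : ∫ x, g x ∂μ = (1/2) * (∫ x, (B (φ x)).toReal ∂μ)
      + (1/2) * (∫ x, (φ x) ^ 2 ∂μ) + (1/2) * (∫ x, σ x * Real.log (1 + σ x) ∂μ)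
      - c₀ * (μ Set.univ).toReal := by
    simp only [hg]
    rw [integral_sub i2 (integrable_const c₀), integral_add i1 iS, integral_add iB iP,
      integral_const_mul, integral_const_mul, integral_const_mul, integral_const]
    simp [smul_eq_mul, measureReal_def]; ring
  rw [ge_iff_le]
  rw [hsplit] at hmono
  linarith
end

section
/- L^{6/5} Lipschitz–Hölder estimate for the difference of quadratic logistic terms: Let (Ω, μ) be a finite measure space, let h̄ > 0 and L > 0, and let h : ℝ × ℝ → ℝ satisfy |h(s, r)| ≤ h̄ and |h(s₁, r₁) − h(s₂, r₂)| ≤ L(|s₁ − s₂| + |r₁ − r₂|) for all arguments. Let σ₁ ∈ L⁶(μ), σ₂ ∈ L³(μ) and φ₁, φ₂ ∈ L²(μ) be measurable functions. Then ‖h(σ₁, φ₁) σ₁² − h(σ₂, φ₂) σ₂²‖_{L^{6/5}} ≤ L (‖σ₁ − σ₂‖_{L²} + ‖φ₁ − φ₂‖_{L²}) ‖σ₁‖²_{L⁶} + h̄ (‖σ₁‖_{L³} + ‖σ₂‖_{L³}) ‖σ₁ − σ₂‖_{L²}. -/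
open MeasureTheory

/-- The `L^p` norm `(∫ |f|^p dμ)^(1/p)` (with real exponent `p`). -/
noncomputable def Lpnorm {Ω : Type*} [MeasurableSpace Ω] (μ : Measure Ω)
    (p : ℝ) (f : Ω → ℝ) : ℝ :=
  (∫ x, |f x| ^ p ∂μ) ^ (1 / p)

section Aux

variable {Ω : Type*} [MeasurableSpace Ω] {μ : Measure Ω}

lemma lintegral_nnnorm_rpow_eq {f : Ω → ℝ} {p : ℝ} (hp : 0 ≤ p) :
    ∫⁻ x, ‖f x‖ₑ ^ p ∂μ = ∫⁻ x, ENNReal.ofReal (|f x| ^ p) ∂μ :=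
  lintegral_congr fun x => by
    rw [Real.enorm_eq_ofReal_abs, ENNReal.ofReal_rpow_of_nonneg (abs_nonneg _) hp]

lemma Lpnorm_eq_toReal {p : ℝ} (hp : 0 < p) {f : Ω → ℝ} (hf : AEMeasurable f μ) :
    Lpnorm μ p f = (eLpNorm' f p μ).toReal := by
  have hmeas : AEStronglyMeasurable (fun x => |f x| ^ p) μ :=
    ((measurable_abs.comp_aemeasurable hf).pow_const p).aestronglyMeasurable
  rw [Lpnorm, eLpNorm', ← ENNReal.toReal_rpow,
    integral_eq_lintegral_of_nonneg_ae
      (Filter.Eventually.of_forall fun x => Real.rpow_nonneg (abs_nonneg _) p) hmeas,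
    lintegral_nnnorm_rpow_eq hp.le]

lemma eLpNorm'_lt_top_of_integrable {p : ℝ} (hp : 0 < p) {f : Ω → ℝ}
    (hint : Integrable (fun x => |f x| ^ p) μ) : eLpNorm' f p μ < ⊤ := by
  rw [eLpNorm']
  refine ENNReal.rpow_lt_top_of_nonneg (by positivity) ?_
  rw [lintegral_nnnorm_rpow_eq hp.le]
  exact ((hasFiniteIntegral_iff_ofReal
    (Filter.Eventually.of_forall fun x => Real.rpow_nonneg (abs_nonneg _) p)).mp
      hint.hasFiniteIntegral).ne

lemma eLpNorm'_abs_eq (f : Ω → ℝ) (p : ℝ) :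
    eLpNorm' (fun x => |f x|) p μ = eLpNorm' f p μ := by
  simp only [eLpNorm']
  congr 1
  exact lintegral_congr fun x => by rw [Real.enorm_eq_ofReal_abs, Real.enorm_eq_ofReal_abs, abs_abs]

end Aux

/-- **`L^{6/5}` Lipschitz–Hölder estimate for the difference of quadratic logistic
terms.** On a finite measure space, if `|h| ≤ h̄` and `h` is `L`-Lipschitz in both
arguments, `σ₁ ∈ L⁶`, `σ₂ ∈ L³`, `φ₁, φ₂ ∈ L²`, then
`‖h(σ₁,φ₁)σ₁² − h(σ₂,φ₂)σ₂²‖_{6/5} ≤ L(‖σ₁−σ₂‖₂ + ‖φ₁−φ₂‖₂)‖σ₁‖₆²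
  + h̄(‖σ₁‖₃ + ‖σ₂‖₃)‖σ₁−σ₂‖₂`. -/
theorem quadratic_logistic_difference_L65_estimate
    {Ω : Type*} [MeasurableSpace Ω] (μ : Measure Ω) [IsFiniteMeasure μ]
    (hbar L : ℝ) (hhbar : 0 < hbar) (hL : 0 < L)
    (h : ℝ → ℝ → ℝ)
    (h_bdd : ∀ s r : ℝ, |h s r| ≤ hbar)
    (h_lip : ∀ s₁ r₁ s₂ r₂ : ℝ, |h s₁ r₁ - h s₂ r₂| ≤ L * (|s₁ - s₂| + |r₁ - r₂|))
    (σ₁ σ₂ φ₁ φ₂ : Ω → ℝ)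
    (hσ₁m : Measurable σ₁) (hσ₂m : Measurable σ₂)
    (hφ₁m : Measurable φ₁) (hφ₂m : Measurable φ₂)
    (hσ₁ : Integrable (fun x => |σ₁ x| ^ (6:ℝ)) μ)
    (hσ₂ : Integrable (fun x => |σ₂ x| ^ (3:ℝ)) μ)
    (hφ₁ : Integrable (fun x => |φ₁ x| ^ (2:ℝ)) μ)
    (hφ₂ : Integrable (fun x => |φ₂ x| ^ (2:ℝ)) μ) :
    Lpnorm μ (6/5) (fun x => h (σ₁ x) (φ₁ x) * (σ₁ x) ^ 2 - h (σ₂ x) (φ₂ x) * (σ₂ x) ^ 2)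
      ≤ L * (Lpnorm μ 2 (fun x => σ₁ x - σ₂ x) + Lpnorm μ 2 (fun x => φ₁ x - φ₂ x))
            * (Lpnorm μ 6 σ₁) ^ 2
        + hbar * (Lpnorm μ 3 σ₁ + Lpnorm μ 3 σ₂) * Lpnorm μ 2 (fun x => σ₁ x - σ₂ x) := by
  -- continuity (hence measurability) of h
  have hcont : Continuous fun p : ℝ × ℝ => h p.1 p.2 := by
    refine (LipschitzWith.of_dist_le_mul (K := Real.toNNReal (2 * L)) fun p q => ?_).continuous
    rw [Real.coe_toNNReal _ (by positivity)]
    have h1 : |p.1 - q.1| ≤ dist p q := by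
      rw [← Real.dist_eq, Prod.dist_eq]; exact le_max_left _ _
    have h2 : |p.2 - q.2| ≤ dist p q := by
      rw [← Real.dist_eq, Prod.dist_eq]; exact le_max_right _ _
    calc dist (h p.1 p.2) (h q.1 q.2) = |h p.1 p.2 - h q.1 q.2| := Real.dist_eq _ _
      _ ≤ L * (|p.1 - q.1| + |p.2 - q.2|) := h_lip _ _ _ _
      _ ≤ L * (dist p q + dist p q) :=
          mul_le_mul_of_nonneg_left (add_le_add h1 h2) hL.le
      _ = 2 * L * dist p q := by ring
  have hh1 : Measurable fun x => h (σ₁ x) (φ₁ x) :=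
    hcont.measurable.comp (hσ₁m.prodMk hφ₁m)
  have hh2 : Measurable fun x => h (σ₂ x) (φ₂ x) :=
    hcont.measurable.comp (hσ₂m.prodMk hφ₂m)
  -- measurability of all auxiliary functions
  have hdm : Measurable fun x => σ₁ x - σ₂ x := hσ₁m.sub hσ₂m
  have hem : Measurable fun x => φ₁ x - φ₂ x := hφ₁m.sub hφ₂m
  have hum : Measurable fun x => L * (|σ₁ x - σ₂ x| + |φ₁ x - φ₂ x|) :=
    (measurable_const.mul (hdm.abs.add hem.abs))
  have hvm : Measurable fun x => (σ₁ x) ^ 2 := hσ₁m.pow_const 2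
  have hwm : Measurable fun x => hbar * (|σ₁ x| + |σ₂ x|) :=
    (measurable_const.mul (hσ₁m.abs.add hσ₂m.abs))
  have hzm : Measurable fun x => |σ₁ x - σ₂ x| := hdm.abs
  have hHm : Measurable fun x => h (σ₁ x) (φ₁ x) * (σ₁ x) ^ 2 - h (σ₂ x) (φ₂ x) * (σ₂ x) ^ 2 :=
    (hh1.mul (hσ₁m.pow_const 2)).sub (hh2.mul (hσ₂m.pow_const 2))
  -- pointwise bound
  have hpoint : ∀ x, |h (σ₁ x) (φ₁ x) * (σ₁ x) ^ 2 - h (σ₂ x) (φ₂ x) * (σ₂ x) ^ 2|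
      ≤ (L * (|σ₁ x - σ₂ x| + |φ₁ x - φ₂ x|)) * ((σ₁ x) ^ 2)
        + (hbar * (|σ₁ x| + |σ₂ x|)) * |σ₁ x - σ₂ x| := by
    intro x
    have key : h (σ₁ x) (φ₁ x) * (σ₁ x) ^ 2 - h (σ₂ x) (φ₂ x) * (σ₂ x) ^ 2
        = (h (σ₁ x) (φ₁ x) - h (σ₂ x) (φ₂ x)) * (σ₁ x) ^ 2
          + h (σ₂ x) (φ₂ x) * ((σ₁ x - σ₂ x) * (σ₁ x + σ₂ x)) := by ring
    rw [key]
    calc |(h (σ₁ x) (φ₁ x) - h (σ₂ x) (φ₂ x)) * (σ₁ x) ^ 2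
          + h (σ₂ x) (φ₂ x) * ((σ₁ x - σ₂ x) * (σ₁ x + σ₂ x))|
        ≤ |(h (σ₁ x) (φ₁ x) - h (σ₂ x) (φ₂ x)) * (σ₁ x) ^ 2|
          + |h (σ₂ x) (φ₂ x) * ((σ₁ x - σ₂ x) * (σ₁ x + σ₂ x))| := abs_add_le _ _
      _ = |h (σ₁ x) (φ₁ x) - h (σ₂ x) (φ₂ x)| * (σ₁ x) ^ 2
          + |h (σ₂ x) (φ₂ x)| * (|σ₁ x - σ₂ x| * |σ₁ x + σ₂ x|) := by
          rw [abs_mul, abs_mul, abs_mul, abs_of_nonneg (sq_nonneg (σ₁ x))]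
      _ ≤ (L * (|σ₁ x - σ₂ x| + |φ₁ x - φ₂ x|)) * (σ₁ x) ^ 2
          + hbar * (|σ₁ x - σ₂ x| * (|σ₁ x| + |σ₂ x|)) := by
          gcongr
          · exact h_lip _ _ _ _
          · exact h_bdd _ _
          · exact abs_add_le _ _
      _ = (L * (|σ₁ x - σ₂ x| + |φ₁ x - φ₂ x|)) * ((σ₁ x) ^ 2)
          + (hbar * (|σ₁ x| + |σ₂ x|)) * |σ₁ x - σ₂ x| := by ring
  -- ENNReal-level abbreviations
  set A := eLpNorm' (fun x => σ₁ x - σ₂ x) 2 μ with hA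
  set B := eLpNorm' (fun x => φ₁ x - φ₂ x) 2 μ with hB
  set C := eLpNorm' σ₁ 6 μ with hC
  set D := eLpNorm' σ₁ 3 μ with hD
  set E := eLpNorm' σ₂ 3 μ with hE
  -- memℒp facts
  have m6 : MemLp σ₁ 6 μ := by
    refine ⟨hσ₁m.aestronglyMeasurable, ?_⟩
    rw [eLpNorm_eq_eLpNorm' (by norm_num) (by norm_num)]
    simpa using eLpNorm'_lt_top_of_integrable (by norm_num) hσ₁
  have m3σ₂ : MemLp σ₂ 3 μ := by
    refine ⟨hσ₂m.aestronglyMeasurable, ?_⟩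
    rw [eLpNorm_eq_eLpNorm' (by norm_num) (by norm_num)]
    simpa using eLpNorm'_lt_top_of_integrable (by norm_num) hσ₂
  have m2φ₁ : MemLp φ₁ 2 μ := by
    refine ⟨hφ₁m.aestronglyMeasurable, ?_⟩
    rw [eLpNorm_eq_eLpNorm' (by norm_num) (by norm_num)]
    simpa using eLpNorm'_lt_top_of_integrable (by norm_num) hφ₁
  have m2φ₂ : MemLp φ₂ 2 μ := by
    refine ⟨hφ₂m.aestronglyMeasurable, ?_⟩
    rw [eLpNorm_eq_eLpNorm' (by norm_num) (by norm_num)]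
    simpa using eLpNorm'_lt_top_of_integrable (by norm_num) hφ₂
  have m3σ₁ : MemLp σ₁ 3 μ := m6.mono_exponent (by norm_num)
  have m2σ₁ : MemLp σ₁ 2 μ := m6.mono_exponent (by norm_num)
  have m2σ₂ : MemLp σ₂ 2 μ := m3σ₂.mono_exponent (by norm_num)
  have md : MemLp (fun x => σ₁ x - σ₂ x) 2 μ := m2σ₁.sub m2σ₂
  have me : MemLp (fun x => φ₁ x - φ₂ x) 2 μ := m2φ₁.sub m2φ₂
  -- finiteness
  have elp_ne_top : ∀ (f : Ω → ℝ) (p : ENNReal), p ≠ 0 → p ≠ ⊤ → MemLp f p μ →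
      eLpNorm' f p.toReal μ ≠ ⊤ := by
    intro f p hp0 hpt hm
    have := hm.2
    rw [eLpNorm_eq_eLpNorm' hp0 hpt] at this
    exact this.ne
  have finA : A ≠ ⊤ := by
    have := elp_ne_top _ 2 (by norm_num) (by norm_num) md; simpa using this
  have finB : B ≠ ⊤ := by
    have := elp_ne_top _ 2 (by norm_num) (by norm_num) me; simpa using this
  have finC : C ≠ ⊤ := by
    have := elp_ne_top _ 6 (by norm_num) (by norm_num) m6; simpa using this
  have finD : D ≠ ⊤ := by
    have := elp_ne_top _ 3 (by norm_num) (by norm_num) m3σ₁; simpa using this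
  have finE : E ≠ ⊤ := by
    have := elp_ne_top _ 3 (by norm_num) (by norm_num) m3σ₂; simpa using this
  -- bound for u
  have hu_bound : eLpNorm' (fun x => L * (|σ₁ x - σ₂ x| + |φ₁ x - φ₂ x|)) 2 μ
      ≤ ENNReal.ofReal L * (A + B) := by
    have h1 : eLpNorm' (fun x => L * (|σ₁ x - σ₂ x| + |φ₁ x - φ₂ x|)) 2 μ
        = ‖L‖ₑ * eLpNorm' (fun x => |σ₁ x - σ₂ x| + |φ₁ x - φ₂ x|) 2 μ :=
      eLpNorm'_const_smul (𝕜 := ℝ) (f := fun x => |σ₁ x - σ₂ x| + |φ₁ x - φ₂ x|) L (by norm_num)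
    rw [h1, ← Real.enorm_eq_ofReal hL.le]
    refine mul_le_mul_right ?_ _
    calc eLpNorm' (fun x => |σ₁ x - σ₂ x| + |φ₁ x - φ₂ x|) 2 μ
        ≤ eLpNorm' (fun x => |σ₁ x - σ₂ x|) 2 μ + eLpNorm' (fun x => |φ₁ x - φ₂ x|) 2 μ :=
          eLpNorm'_add_le hdm.abs.aestronglyMeasurable hem.abs.aestronglyMeasurable one_le_two
      _ = A + B := by rw [eLpNorm'_abs_eq, eLpNorm'_abs_eq]
  -- bound for w
  have hw_bound : eLpNorm' (fun x => hbar * (|σ₁ x| + |σ₂ x|)) 3 μ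
      ≤ ENNReal.ofReal hbar * (D + E) := by
    have h1 : eLpNorm' (fun x => hbar * (|σ₁ x| + |σ₂ x|)) 3 μ
        = ‖hbar‖ₑ * eLpNorm' (fun x => |σ₁ x| + |σ₂ x|) 3 μ :=
      eLpNorm'_const_smul (𝕜 := ℝ) (f := fun x => |σ₁ x| + |σ₂ x|) hbar (by norm_num)
    rw [h1, ← Real.enorm_eq_ofReal hhbar.le]
    refine mul_le_mul_right ?_ _
    calc eLpNorm' (fun x => |σ₁ x| + |σ₂ x|) 3 μ
        ≤ eLpNorm' (fun x => |σ₁ x|) 3 μ + eLpNorm' (fun x => |σ₂ x|) 3 μ :=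
          eLpNorm'_add_le hσ₁m.abs.aestronglyMeasurable hσ₂m.abs.aestronglyMeasurable
            (by norm_num)
      _ = D + E := by rw [eLpNorm'_abs_eq, eLpNorm'_abs_eq]
  -- identity for v
  have hv_eq : eLpNorm' (fun x => (σ₁ x) ^ 2) 3 μ = C ^ 2 := by
    rw [hC]
    simp only [eLpNorm']
    have hpt : ∀ x, ‖(σ₁ x) ^ 2‖ₑ ^ (3:ℝ) = ‖σ₁ x‖ₑ ^ (6:ℝ) := by
      intro x
      rw [enorm_pow, ← ENNReal.rpow_natCast (‖σ₁ x‖ₑ) 2,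
        ← ENNReal.rpow_mul]
      norm_num
    rw [lintegral_congr hpt, ← ENNReal.rpow_natCast ((∫⁻ x, ‖σ₁ x‖ₑ ^ (6:ℝ) ∂μ) ^ (1/(6:ℝ))) 2,
      ← ENNReal.rpow_mul]
    norm_num
  -- identity for z
  have hz_eq : eLpNorm' (fun x => |σ₁ x - σ₂ x|) 2 μ = A := eLpNorm'_abs_eq _ _
  -- main ENNReal estimate
  have main : eLpNorm' (fun x => h (σ₁ x) (φ₁ x) * (σ₁ x) ^ 2 - h (σ₂ x) (φ₂ x) * (σ₂ x) ^ 2)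
      (6/5) μ ≤ ENNReal.ofReal L * (A + B) * C ^ 2 + ENNReal.ofReal hbar * (D + E) * A := by
    calc eLpNorm' (fun x => h (σ₁ x) (φ₁ x) * (σ₁ x) ^ 2 - h (σ₂ x) (φ₂ x) * (σ₂ x) ^ 2) (6/5) μ
        ≤ eLpNorm' (fun x => (L * (|σ₁ x - σ₂ x| + |φ₁ x - φ₂ x|)) * ((σ₁ x) ^ 2)
            + (hbar * (|σ₁ x| + |σ₂ x|)) * |σ₁ x - σ₂ x|) (6/5) μ := by
          refine eLpNorm'_mono_ae (by norm_num) (Filter.Eventually.of_forall fun x => ?_)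
          simp only [Real.norm_eq_abs]
          exact (hpoint x).trans (le_abs_self _)
      _ ≤ eLpNorm' (fun x => (L * (|σ₁ x - σ₂ x| + |φ₁ x - φ₂ x|)) * ((σ₁ x) ^ 2)) (6/5) μ
          + eLpNorm' (fun x => (hbar * (|σ₁ x| + |σ₂ x|)) * |σ₁ x - σ₂ x|) (6/5) μ :=
          by
            have h65 : (1:ℝ) ≤ 6/5 := by norm_num
            have := eLpNorm'_add_le (μ := μ) (hum.mul hvm).aestronglyMeasurable
              (hwm.mul hzm).aestronglyMeasurable h65
            exact this
      _ ≤ eLpNorm' (fun x => L * (|σ₁ x - σ₂ x| + |φ₁ x - φ₂ x|)) 2 μ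
            * eLpNorm' (fun x => (σ₁ x) ^ 2) 3 μ
          + eLpNorm' (fun x => hbar * (|σ₁ x| + |σ₂ x|)) 3 μ
            * eLpNorm' (fun x => |σ₁ x - σ₂ x|) 2 μ := by
          refine add_le_add ?_ ?_
          · refine (eLpNorm'_le_eLpNorm'_mul_eLpNorm' (p := 2) (q := 3) hum.aestronglyMeasurable
              hvm.aestronglyMeasurable (· * ·) 1
              (Filter.Eventually.of_forall fun x => by simp [nnnorm_mul])
              (by norm_num) (by norm_num) (by norm_num)).trans_eq (by simp)
          · refine (eLpNorm'_le_eLpNorm'_mul_eLpNorm' (p := 3) (q := 2) hwm.aestronglyMeasurable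
              hzm.aestronglyMeasurable (· * ·) 1
              (Filter.Eventually.of_forall fun x => by simp [nnnorm_mul])
              (by norm_num) (by norm_num) (by norm_num)).trans_eq (by simp)
      _ ≤ ENNReal.ofReal L * (A + B) * C ^ 2 + ENNReal.ofReal hbar * (D + E) * A := by
          rw [hv_eq, hz_eq]
          exact add_le_add (mul_le_mul_left hu_bound _) (mul_le_mul_left hw_bound _)
  -- convert to real
  have fin1 : ENNReal.ofReal L * (A + B) * C ^ 2 ≠ ⊤ :=
    ENNReal.mul_ne_top (ENNReal.mul_ne_top ENNReal.ofReal_ne_top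
      (ENNReal.add_ne_top.2 ⟨finA, finB⟩)) (ENNReal.pow_ne_top finC)
  have fin2 : ENNReal.ofReal hbar * (D + E) * A ≠ ⊤ :=
    ENNReal.mul_ne_top (ENNReal.mul_ne_top ENNReal.ofReal_ne_top
      (ENNReal.add_ne_top.2 ⟨finD, finE⟩)) finA
  have hRfin : ENNReal.ofReal L * (A + B) * C ^ 2 + ENNReal.ofReal hbar * (D + E) * A ≠ ⊤ :=
    ENNReal.add_ne_top.2 ⟨fin1, fin2⟩
  have hRtoReal : (ENNReal.ofReal L * (A + B) * C ^ 2
        + ENNReal.ofReal hbar * (D + E) * A).toReal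
      = L * (A.toReal + B.toReal) * C.toReal ^ 2 + hbar * (D.toReal + E.toReal) * A.toReal := by
    rw [ENNReal.toReal_add fin1 fin2, ENNReal.toReal_mul,
      ENNReal.toReal_mul, ENNReal.toReal_mul, ENNReal.toReal_mul, ENNReal.toReal_pow,
      ENNReal.toReal_add finA finB, ENNReal.toReal_add finD finE,
      ENNReal.toReal_ofReal hL.le, ENNReal.toReal_ofReal hhbar.le]
  rw [Lpnorm_eq_toReal (by norm_num) hHm.aemeasurable,
    Lpnorm_eq_toReal (by norm_num) hdm.aemeasurable,
    Lpnorm_eq_toReal (by norm_num) hem.aemeasurable,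
    Lpnorm_eq_toReal (by norm_num) hσ₁m.aemeasurable,
    Lpnorm_eq_toReal (by norm_num) hσ₁m.aemeasurable,
    Lpnorm_eq_toReal (by norm_num) hσ₂m.aemeasurable]
  rw [← hA, ← hB, ← hC, ← hD, ← hE, ← hRtoReal]
  exact ENNReal.toReal_mono hRfin main
end
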